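/- For M a subset of the primes, the function W_M(s) = ∏_{p ∈ M} [(1 - p^{-s}) e^{p^{-s}}]^{-1} is analytic and non-vanishing on Re(s) > 1/2, and satisfies Z_M(s) = W_M(s) · e^{η_M(s)} for Re(s) > 1, where η_M(s) = ∑_{p ∈ M} p^{-s}. -/

import Mathlib

open Complex

private noncomputable def Lf (p : ℕ) (s : ℂ) : ℂ :=
  Complex.log (1 - (p : ℂ) ^ (-s)) + (p : ℂ) ^ (-s)

private lemma norm_z {p : ℕ} (hp : 0 < p) (s : ℂ) :
    ‖((p : ℕ) : ℂ) ^ (-s)‖ = (p : ℝ) ^ (-s.re) := by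
  rw [show ((p : ℕ) : ℂ) = (((p : ℝ) : ℂ)) by push_cast; rfl,
    norm_cpow_eq_rpow_re_of_pos (by exact_mod_cast hp), neg_re]

private lemma z_le {p : ℕ} (hp : 2 ≤ p) {σ : ℝ} (hσ : 0 < σ) {s : ℂ} (hs : σ ≤ s.re) :
    ‖((p : ℕ) : ℂ) ^ (-s)‖ ≤ (p : ℝ) ^ (-σ) ∧ ((p : ℝ) : ℝ) ^ (-σ) ≤ (2 : ℝ) ^ (-σ) := by
  have hp1 : (1 : ℝ) ≤ (p : ℝ) := by exact_mod_cast Nat.one_le_of_lt hp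
  constructor
  · rw [norm_z (by omega) s]
    exact Real.rpow_le_rpow_of_exponent_le hp1 (by linarith)
  · rw [Real.rpow_neg (by positivity), Real.rpow_neg (by norm_num)]
    refine inv_anti₀ (by positivity) ?_
    exact Real.rpow_le_rpow (by norm_num) (by exact_mod_cast hp) hσ.le

private lemma r_lt_one {σ : ℝ} (hσ : 0 < σ) : (2 : ℝ) ^ (-σ) < 1 :=
  Real.rpow_lt_one_of_one_lt_of_neg one_lt_two (by linarith)

/-- the key estimate on `Lf`. -/
private lemma norm_Lf_le {p : ℕ} (hp : 2 ≤ p) {σ : ℝ} (hσ : 0 < σ) {s : ℂ} (hs : σ ≤ s.re) :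
    ‖Lf p s‖ ≤ (1 - (2 : ℝ) ^ (-σ))⁻¹ / 2 * (p : ℝ) ^ ((-σ) * 2) := by
  set z : ℂ := ((p : ℕ) : ℂ) ^ (-s)
  obtain ⟨h1, h2⟩ := z_le hp hσ hs
  have hr1 := r_lt_one hσ
  have hzr : ‖z‖ ≤ (2 : ℝ) ^ (-σ) := h1.trans h2
  have hz1 : ‖z‖ < 1 := lt_of_le_of_lt hzr hr1
  have key : ‖Lf p s‖ ≤ ‖z‖ ^ 2 * (1 - ‖z‖)⁻¹ / 2 := by
    have := Complex.norm_log_one_add_sub_self_le (z := -z) (by rwa [norm_neg])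
    simpa [Lf, sub_eq_add_neg, sub_neg_eq_add, z] using this
  refine key.trans ?_
  have hinv : (1 - ‖z‖)⁻¹ ≤ (1 - (2 : ℝ) ^ (-σ))⁻¹ := by
    apply inv_anti₀ (by linarith) (by linarith)
  have hsq : ‖z‖ ^ 2 ≤ ((p : ℝ) ^ (-σ)) ^ 2 := by
    apply pow_le_pow_left₀ (norm_nonneg _) h1
  have hps : ((p : ℝ) ^ (-σ)) ^ 2 = (p : ℝ) ^ ((-σ) * 2) := by
    rw [← Real.rpow_natCast ((p : ℝ) ^ (-σ)) 2, ← Real.rpow_mul (by positivity)]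
    norm_num
  calc ‖z‖ ^ 2 * (1 - ‖z‖)⁻¹ / 2
      ≤ ((p : ℝ) ^ (-σ)) ^ 2 * (1 - (2 : ℝ) ^ (-σ))⁻¹ / 2 := by
        apply div_le_div_of_nonneg_right ?_ (by norm_num)
        apply mul_le_mul hsq hinv (inv_nonneg.mpr (by linarith)) (by positivity)
    _ = (1 - (2 : ℝ) ^ (-σ))⁻¹ / 2 * (p : ℝ) ^ ((-σ) * 2) := by rw [hps]; ring

private lemma summable_aux (M : Set ℕ) {σ : ℝ} (hσ : 1 / 2 < σ) (c : ℝ) :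
    Summable (fun p : M => c * ((p : ℕ) : ℝ) ^ ((-σ) * 2)) := by
  apply Summable.mul_left
  exact (Real.summable_nat_rpow.mpr (by linarith)).subtype M

/-- for `M` a set of primes, `W_M(s) = ∏_{p ∈ M} ((1 - p^{-s}) e^{p^{-s}})⁻¹`
is analytic and nonvanishing on `Re s > 1/2`, and `Z_M(s) = W_M(s) e^{η_M(s)}` for
`Re s > 1`. -/
theorem stmt11 (M : Set ℕ) (hM : ∀ p ∈ M, Nat.Prime p) :
    ∃ W : ℂ → ℂ,
      AnalyticOn ℂ W {s : ℂ | 1 / 2 < s.re} ∧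
      (∀ s ∈ {s : ℂ | 1 / 2 < s.re}, W s ≠ 0 ∧
        HasProd (fun p : M =>
          ((1 - ((p : ℕ) : ℂ) ^ (-s)) * Complex.exp (((p : ℕ) : ℂ) ^ (-s)))⁻¹) (W s)) ∧
      (∀ s : ℂ, 1 < s.re →
        (∏' p : M, (1 - ((p : ℕ) : ℂ) ^ (-s))⁻¹) =
          W s * Complex.exp (∑' p : M, ((p : ℕ) : ℂ) ^ (-s))) := by
  set U : Set ℂ := {s : ℂ | 1 / 2 < s.re} with hU_def
  have hUopen : IsOpen U := isOpen_lt continuous_const Complex.continuous_re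
  have hp2 : ∀ p : M, 2 ≤ (p : ℕ) := fun p => (hM p p.2).two_le
  -- basic facts for s ∈ U
  have hz1 : ∀ (p : M) (s : ℂ), s ∈ U → ‖((p : ℕ) : ℂ) ^ (-s)‖ < 1 := by
    intro p s hs
    have := (z_le (hp2 p) (σ := s.re) (by exact lt_trans (by norm_num) hs) le_rfl)
    exact lt_of_le_of_lt (this.1.trans this.2) (r_lt_one (lt_trans (by norm_num) hs))
  have hne : ∀ (p : M) (s : ℂ), s ∈ U → (1 : ℂ) - ((p : ℕ) : ℂ) ^ (-s) ≠ 0 := by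
    intro p s hs
    intro h
    have h2 : ((p : ℕ) : ℂ) ^ (-s) = 1 := by linear_combination -h
    have h3 := hz1 p s hs
    rw [h2] at h3
    simp at h3
  -- summability of Lf
  have hsum : ∀ s ∈ U, Summable (fun p : M => Lf (p : ℕ) s) := by
    intro s hs
    apply Summable.of_norm
    apply Summable.of_nonneg_of_le (fun p => norm_nonneg _)
      (fun p => norm_Lf_le (hp2 p) (σ := s.re) (lt_trans (by norm_num) hs) le_rfl)
    exact summable_aux M hs _
  refine ⟨fun s => Complex.exp (-∑' p : M, Lf (p : ℕ) s), ?_, ?_, ?_⟩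
  · -- analyticity
    have hTLU : TendstoLocallyUniformlyOn (fun t : Finset M => fun s => ∑ p ∈ t, Lf (p : ℕ) s)
        (fun s => ∑' p : M, Lf (p : ℕ) s) Filter.atTop U := by
      rw [tendstoLocallyUniformlyOn_iff_forall_isCompact hUopen]
      intro K hKU hK
      rcases K.eq_empty_or_nonempty with rfl | hKne
      · exact tendstoUniformlyOn_empty
      · obtain ⟨s₀, hs₀K, hmin⟩ := hK.exists_isMinOn hKne Complex.continuous_re.continuousOn
        have hσ : 1 / 2 < s₀.re := hKU hs₀K
        apply tendstoUniformlyOn_tsum (summable_aux M hσ ((1 - (2 : ℝ) ^ (-s₀.re))⁻¹ / 2))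
        intro p x hx
        exact norm_Lf_le (hp2 p) (lt_trans (by norm_num) hσ) (hmin hx)
    have hdiff : DifferentiableOn ℂ (fun s => ∑' p : M, Lf (p : ℕ) s) U := by
      apply hTLU.differentiableOn ?_ hUopen
      filter_upwards with t
      apply DifferentiableOn.fun_sum
      intro p _
      intro s hs
      show DifferentiableWithinAt ℂ
        (fun s => Complex.log (1 - ((p : ℕ) : ℂ) ^ (-s)) + ((p : ℕ) : ℂ) ^ (-s)) U s
      have hcp : ((p : ℕ) : ℂ) ≠ 0 := by
        have : (p : ℕ) ≠ 0 := by have := hp2 p; omega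
        exact_mod_cast this
      have hzdiff : DifferentiableAt ℂ (fun s : ℂ => ((p : ℕ) : ℂ) ^ (-s)) s := by
        have : (fun s : ℂ => ((p : ℕ) : ℂ) ^ (-s))
            = fun s : ℂ => Complex.exp (Complex.log ((p : ℕ) : ℂ) * (-s)) := by
          funext s; rw [Complex.cpow_def_of_ne_zero hcp]
        rw [this]
        exact (differentiable_exp.comp ((differentiable_neg).const_mul _)).differentiableAt
      apply DifferentiableAt.differentiableWithinAt
      apply DifferentiableAt.add ?_ hzdiff
      apply DifferentiableAt.clog ((differentiableAt_const 1).sub hzdiff)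
      rw [Complex.mem_slitPlane_iff]
      left
      have := hz1 p s hs
      have hre := Complex.abs_re_le_norm (((p : ℕ) : ℂ) ^ (-s))
      show 0 < 1 - (((p : ℕ) : ℂ) ^ (-s)).re
      have : (((p : ℕ) : ℂ) ^ (-s)).re < 1 := by
        calc (((p : ℕ) : ℂ) ^ (-s)).re ≤ |(((p : ℕ) : ℂ) ^ (-s)).re| := le_abs_self _
          _ ≤ ‖((p : ℕ) : ℂ) ^ (-s)‖ := hre
          _ < 1 := hz1 p s hs
      linarith
    exact (hdiff.neg.cexp).analyticOn hUopen
  · -- nonvanishing and HasProd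
    intro s hs
    refine ⟨Complex.exp_ne_zero _, ?_⟩
    have h1 : HasProd (fun p : M => Complex.exp (-(Lf (p : ℕ) s)))
        (Complex.exp (-∑' p : M, Lf (p : ℕ) s)) := ((hsum s hs).hasSum.neg).cexp
    convert h1 using 2 with p
    rw [Lf, neg_add, Complex.exp_add, Complex.exp_neg, Complex.exp_neg, ← mul_inv,
      Complex.exp_log (hne p s hs)]
  · -- Euler product identity for Re s > 1
    intro s hs
    have hsU : s ∈ U := by simp only [hU_def, Set.mem_setOf_eq]; linarith
    have hprodW : HasProd (fun p : M =>
        ((1 - ((p : ℕ) : ℂ) ^ (-s)) * Complex.exp (((p : ℕ) : ℂ) ^ (-s)))⁻¹)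
        (Complex.exp (-∑' p : M, Lf (p : ℕ) s)) := by
      have h1 : HasProd (fun p : M => Complex.exp (-(Lf (p : ℕ) s)))
          (Complex.exp (-∑' p : M, Lf (p : ℕ) s)) := ((hsum s hsU).hasSum.neg).cexp
      convert h1 using 2 with p
      rw [Lf, neg_add, Complex.exp_add, Complex.exp_neg, Complex.exp_neg, ← mul_inv,
        Complex.exp_log (hne p s hsU)]
    have hsumz : Summable (fun p : M => ((p : ℕ) : ℂ) ^ (-s)) := by
      apply Summable.of_norm
      have : Summable (fun p : M => ((p : ℕ) : ℝ) ^ (-s.re)) :=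
        (Real.summable_nat_rpow.mpr (by linarith)).subtype M
      refine this.congr fun p => ?_
      rw [norm_z (by have := hp2 p; omega)]
    have hprodE : HasProd (fun p : M => Complex.exp (((p : ℕ) : ℂ) ^ (-s)))
        (Complex.exp (∑' p : M, ((p : ℕ) : ℂ) ^ (-s))) := hsumz.hasSum.cexp
    have := hprodW.mul hprodE
    have heq : (fun p : M =>
        ((1 - ((p : ℕ) : ℂ) ^ (-s)) * Complex.exp (((p : ℕ) : ℂ) ^ (-s)))⁻¹ *
          Complex.exp (((p : ℕ) : ℂ) ^ (-s)))
        = fun p : M => (1 - ((p : ℕ) : ℂ) ^ (-s))⁻¹ := by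
      funext p
      rw [mul_inv, mul_assoc, inv_mul_cancel₀ (Complex.exp_ne_zero _), mul_one]
    rw [heq] at this
    exact this.tprod_eq
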